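/- Let m, r be positive integers with r ≥ 2, and suppose ‖α·m‖ < 1/(2r) and ‖β·m·⌊α·m⌉‖ < 1/(2r²). Then r·m ≤ ℓ(m), and for every integer t with 1 ≤ t ≤ r one has g(t·m) = t²·g(m). -/

import Mathlib

/-!
STATEMENT 13: if ‖α·m‖ < 1/(2r) and ‖β·m·⌊α·m⌉‖ < 1/(2r²), then r·m ≤ ℓ(m) and
g(t·m) = t²·g(m) for 1 ≤ t ≤ r.
-/

namespace Stmt13

/-- `ℓ(m) = m·⌊1/(2·‖α·m‖)⌋`. -/
noncomputable def ell (α : ℝ) (m : ℤ) : ℤ :=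
  m * ⌊1 / (2 * |α * m - round (α * m)|)⌋

theorem long_progression (α β : ℝ) (hα : 0 < α) (hβ : 0 < β)
    (hind : LinearIndependent ℚ ![(1 : ℝ), α, α ^ 2])
    (hβ' : (∃ b : ℤ, β = (b : ℝ)) ∨ Irrational β)
    (g : ℤ → ℤ) (hg : ∀ n : ℤ, g n = round (β * n * round (α * n)))
    (m r : ℤ) (hm : 0 < m) (hr : 2 ≤ r)
    (h1 : |α * m - round (α * m)| < 1 / (2 * r))
    (h2 : |β * m * round (α * m) - round (β * m * round (α * m))| < 1 / (2 * r ^ 2)) :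
    r * m ≤ ell α m ∧ ∀ t : ℤ, 1 ≤ t → t ≤ r → g (t * m) = t ^ 2 * g m := by
  have hαirr : Irrational α := by
    rw [Fintype.linearIndependent_iff] at hind
    by_contra h
    rw [Irrational] at h
    push_neg at h
    obtain ⟨q, hq⟩ := h
    have := hind ![(q : ℚ), -1, 0] (by
      simp [Fin.sum_univ_three, ← hq]) 1
    norm_num at this
  have hrR : (2 : ℝ) ≤ (r : ℝ) := by exact_mod_cast hr
  have hrpos : (0 : ℝ) < (r : ℝ) := by linarith
  set a : ℤ := round (α * m) with ha
  set ε : ℝ := α * m - a with hε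
  have hεne : ε ≠ 0 := by
    have : Irrational (α * m) := hαirr.mul_intCast hm.ne'
    have := this.ne_int a
    intro h0
    apply this
    rw [hε] at h0
    linarith [sub_eq_zero.mp h0]
  have hεpos : 0 < |ε| := abs_pos.mpr hεne
  constructor
  · have hfl : r ≤ ⌊1 / (2 * |ε|)⌋ := by
      rw [Int.le_floor]
      rw [le_div_iff₀ (by linarith)]
      have : |ε| * (2 * r) < 1 := by
        have := (lt_div_iff₀ (by positivity)).mp h1
        linarith
      nlinarith
    unfold ell
    rw [mul_comm r m]
    exact mul_le_mul_of_nonneg_left hfl hm.le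
  · intro t ht1 htr
    have htR : (1 : ℝ) ≤ (t : ℝ) := by exact_mod_cast ht1
    have htrR : (t : ℝ) ≤ (r : ℝ) := by exact_mod_cast htr
    have hεr : |ε| < 1 / (2 * r) := h1
    have htε : |(t : ℝ) * ε| < 1 / 2 := by
      rw [abs_mul, abs_of_nonneg (by linarith : (0:ℝ) ≤ (t:ℝ))]
      have h1' : |ε| < 1 / (2 * r) := hεr
      have : (t : ℝ) * |ε| ≤ (r : ℝ) * |ε| := by nlinarith
      have : (r : ℝ) * |ε| < (r : ℝ) * (1 / (2 * r)) := by nlinarith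
      have hrr : (r : ℝ) * (1 / (2 * r)) = 1 / 2 := by
        field_simp
      nlinarith
    have hround1 : round (α * (t * m)) = t * a := by
      have hx : α * (t * m) = ((t * a : ℤ) : ℝ) + (t : ℝ) * ε := by
        push_cast
        rw [hε]
        ring
      rw [hx, round_intCast_add]
      have : round ((t : ℝ) * ε) = 0 := by
        rw [round_eq_zero_iff, Set.mem_Ico]
        obtain ⟨hl, hu⟩ := abs_lt.mp htε
        exact ⟨by linarith, by linarith⟩
      omega
    set k : ℤ := round (β * m * a) with hk
    set δ : ℝ := β * m * a - k with hδ
    have hgm : g m = k := by rw [hg]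
    have ht2 : |(t : ℝ) ^ 2 * δ| < 1 / 2 := by
      rw [abs_mul, abs_of_nonneg (by positivity : (0:ℝ) ≤ (t:ℝ)^2)]
      have h2' : |δ| < 1 / (2 * (r : ℝ) ^ 2) := by
        have : (1 : ℝ) / (2 * (r:ℝ) ^ 2) = 1 / (2 * ((r:ℝ)^2)) := by ring_nf
        calc |δ| < 1 / (2 * (r:ℝ) ^ 2) := by
              have := h2
              push_cast at this ⊢
              convert this using 2
        _ = _ := rfl
      have hsq : (t : ℝ) ^ 2 ≤ (r : ℝ) ^ 2 := by nlinarith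
      have hδ0 : 0 ≤ |δ| := abs_nonneg _
      have : (t : ℝ) ^ 2 * |δ| ≤ (r : ℝ) ^ 2 * |δ| := by nlinarith
      have : (r : ℝ) ^ 2 * |δ| < (r : ℝ) ^ 2 * (1 / (2 * (r:ℝ)^2)) := by
        have hr2 : (0:ℝ) < (r:ℝ)^2 := by positivity
        exact mul_lt_mul_of_pos_left h2' hr2
      have hrr : (r : ℝ) ^ 2 * (1 / (2 * (r:ℝ)^2)) = 1 / 2 := by
        field_simp
      nlinarith
    rw [hg, hgm]
    have hcast : ((t * m : ℤ) : ℝ) = (t : ℝ) * (m : ℝ) := by push_cast; ring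
    rw [hcast, hround1]
    have hx : β * ((t : ℝ) * m) * ((t * a : ℤ) : ℝ) = ((t ^ 2 * k : ℤ) : ℝ) + (t : ℝ) ^ 2 * δ := by
      push_cast
      rw [hδ]
      ring
    rw [hx, round_intCast_add]
    have : round ((t : ℝ) ^ 2 * δ) = 0 := by
      rw [round_eq_zero_iff, Set.mem_Ico]
      obtain ⟨hl, hu⟩ := abs_lt.mp ht2
      exact ⟨by linarith, by linarith⟩
    omega

end Stmt13
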